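/- The rational function 1/(xy) ∈ F(x,y) is not (σ_x,σ_y)-summable in F(x,y): there exist no g, h ∈ F(x,y) with 1/(xy) = σ_x(g) − g + σ_y(h) − h. -/

import Mathlib

/-- `F(x,y)`, realized as `RatFunc (RatFunc F)` (the inner variable is `x`, the outer is `y`). -/
noncomputable abbrev RatFunc2 (F : Type*) [Field F] : Type _ := RatFunc (RatFunc F)

/-- The element `x` of `F(x,y)`. -/
noncomputable abbrev RatFunc2.x (F : Type*) [Field F] : RatFunc2 F := RatFunc.C RatFunc.X

/-- The element `y` of `F(x,y)`. -/
noncomputable abbrev RatFunc2.y (F : Type*) [Field F] : RatFunc2 F := RatFunc.X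

open Polynomial
open scoped nonZeroDivisors PowerSeries LaurentSeries

/-- The coercion `RatFunc F → F⸨X⸩` as an algebra hom. -/
noncomputable def RatFunc.coeAlgHom (F : Type*) [Field F] : RatFunc F →ₐ[F[X]] F⸨X⸩ :=
  IsScalarTower.toAlgHom F[X] (RatFunc F) F⸨X⸩

theorem RatFunc.coe_def {F : Type*} [Field F] (f : RatFunc F) :
    (f : F⸨X⸩) = RatFunc.coeAlgHom F f := rfl

theorem RatFunc.coe_C {F : Type*} [Field F] (r : F) :
    ((RatFunc.C r : RatFunc F) : F⸨X⸩) = HahnSeries.C r := by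
  rw [RatFunc.coe_def, ← RatFunc.algebraMap_C, AlgHom.commutes,
    Polynomial.algebraMap_hahnSeries_apply, Polynomial.coe_C, PowerSeries.coe_C]

namespace NSum

variable {K : Type*} [Field K]

theorem algebraMap_eq_aeval :
    (algebraMap K[X] (RatFunc K)) = ((Polynomial.aeval RatFunc.X : K[X] →ₐ[K] RatFunc K) : K[X] →+* RatFunc K) := by
  have : (IsScalarTower.toAlgHom K K[X] (RatFunc K)) = (Polynomial.aeval RatFunc.X : K[X] →ₐ[K] RatFunc K) := by
    apply Polynomial.algHom_ext
    simp [RatFunc.algebraMap_X]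
  exact RingHom.ext fun p => AlgHom.congr_fun this p

theorem aeval_eq (c : K) (p : K[X]) :
    Polynomial.aeval (RatFunc.X + RatFunc.C c) p
      = algebraMap K[X] (RatFunc K) (p.comp (X + Polynomial.C c)) := by
  rw [algebraMap_eq_aeval]
  show _ = (Polynomial.aeval RatFunc.X : K[X] →ₐ[K] RatFunc K) (p.comp (X + Polynomial.C c))
  rw [Polynomial.aeval_comp]
  simp [RatFunc.algebraMap_eq_C]

theorem comp_injective (c : K) : Function.Injective (fun p : K[X] => p.comp (X + Polynomial.C c)) := by
  intro p q h
  have h2 := congrArg (fun r : K[X] => r.comp (X - Polynomial.C c)) h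
  simpa [Polynomial.comp_assoc, Polynomial.add_comp, Polynomial.sub_comp, Polynomial.X_comp,
    Polynomial.C_comp] using h2

/-- Substitution `X ↦ X + c` on rational functions. -/
noncomputable def subst (c : K) : RatFunc K →ₐ[K] RatFunc K :=
  RatFunc.liftAlgHom (Polynomial.aeval (RatFunc.X + RatFunc.C c)) <| by
    refine nonZeroDivisors_le_comap_nonZeroDivisors_of_injective _ ?_
    intro p q h
    simp only [aeval_eq] at h
    exact comp_injective c ((RatFunc.algebraMap_injective K) h)

theorem subst_algebraMap (c : K) (p : K[X]) :
    subst c (algebraMap K[X] (RatFunc K) p)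
      = algebraMap K[X] (RatFunc K) (p.comp (X + Polynomial.C c)) := by
  have h := RatFunc.liftAlgHom_apply_div
    (φ := Polynomial.aeval (RatFunc.X + RatFunc.C c))
    (hφ := by
      refine nonZeroDivisors_le_comap_nonZeroDivisors_of_injective _ ?_
      intro p q h
      simp only [aeval_eq] at h
      exact comp_injective c ((RatFunc.algebraMap_injective K) h)) p 1
  simp only [map_one, div_one] at h
  rw [subst, h, aeval_eq]

@[simp] theorem subst_X (c : K) : subst c RatFunc.X = RatFunc.X + RatFunc.C c := by
  have h := subst_algebraMap c X
  simpa [RatFunc.algebraMap_X, RatFunc.algebraMap_C] using h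

@[simp] theorem subst_C (c a : K) : subst c (RatFunc.C a) = RatFunc.C a := by
  rw [← RatFunc.algebraMap_eq_C]
  exact (subst c).commutes a

/-- Extensionality for ring homs out of `RatFunc K`. -/
theorem ringHom_ext {L : Type*} [CommRing L] [Nontrivial L] {f g : RatFunc K →+* L}
    (hC : ∀ a : K, f (RatFunc.C a) = g (RatFunc.C a)) (hX : f RatFunc.X = g RatFunc.X) :
    f = g := by
  refine IsLocalization.ringHom_ext K[X]⁰ ?_
  refine Polynomial.ringHom_ext' ?_ ?_
  · ext a
    simpa [RatFunc.algebraMap_C] using hC a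
  · simpa [RatFunc.algebraMap_X] using hX

theorem subst_subst (c d : K) (f : RatFunc K) :
    subst c (subst d f) = subst (d + c) f := by
  have h : ((subst c : RatFunc K →ₐ[K] RatFunc K) : RatFunc K →+* RatFunc K).comp
      ((subst d : RatFunc K →ₐ[K] RatFunc K) : RatFunc K →+* RatFunc K)
      = ((subst (d + c) : RatFunc K →ₐ[K] RatFunc K) : RatFunc K →+* RatFunc K) := by
    refine ringHom_ext (fun a => by simp) ?_
    show subst c (subst d RatFunc.X) = subst (d + c) RatFunc.X
    simp [map_add]
    ring
  exact RingHom.congr_fun h f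

theorem subst_zero (f : RatFunc K) : subst (0 : K) f = f := by
  have h : ((subst 0 : RatFunc K →ₐ[K] RatFunc K) : RatFunc K →+* RatFunc K)
      = RingHom.id (RatFunc K) := by
    refine ringHom_ext (fun a => by simp) (by simp)
  exact RingHom.congr_fun h f

/-- The residue of a rational function at a point `a`. -/
noncomputable def res (a : K) (f : RatFunc K) : K :=
  ((subst a f : RatFunc K) : LaurentSeries K).coeff (-1)

theorem res_sub (a : K) (f g : RatFunc K) : res a (f - g) = res a f - res a g := by
  simp [res, map_sub, HahnSeries.coeff_sub]

theorem res_add (a : K) (f g : RatFunc K) : res a (f + g) = res a f + res a g := by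
  simp [res, map_add, HahnSeries.coeff_add]

theorem res_subst (a c : K) (f : RatFunc K) : res a (subst c f) = res (c + a) f := by
  rw [res, subst_subst, res]

theorem coe_poly_div (p q : K[X]) (hq : q ≠ 0) (hq0 : q.coeff 0 ≠ 0) :
    ((algebraMap K[X] (RatFunc K) p / algebraMap K[X] (RatFunc K) q : RatFunc K) : K⸨X⸩)
      = ((((p : K⟦X⟧) * (q : K⟦X⟧)⁻¹ : K⟦X⟧) : K⸨X⸩)) := by
  have hqc : PowerSeries.constantCoeff (q : K⟦X⟧) ≠ 0 := by
    rwa [Polynomial.constantCoeff_coe]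
  have hmul : ((p : K⟦X⟧) * (q : K⟦X⟧)⁻¹) * (q : K⟦X⟧) = (p : K⟦X⟧) := by
    rw [mul_assoc, PowerSeries.inv_mul_cancel _ hqc, mul_one]
  have hqL : ((algebraMap K[X] (RatFunc K) q : RatFunc K) : K⸨X⸩) ≠ 0 := by
    rw [RatFunc.coe_def, AlgHom.commutes]
    rw [Polynomial.algebraMap_hahnSeries_apply]
    intro h
    apply hq
    apply Polynomial.coe_injective (R := K)
    apply HahnSeries.ofPowerSeries_injective (h.trans (map_zero _).symm)
  rw [map_div₀]
  rw [div_eq_iff hqL]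
  have hp : ((algebraMap K[X] (RatFunc K) p : RatFunc K) : K⸨X⸩) = ((p : K⟦X⟧) : K⸨X⸩) := by
    rw [RatFunc.coe_def, AlgHom.commutes, Polynomial.algebraMap_hahnSeries_apply]
  have hq' : ((algebraMap K[X] (RatFunc K) q : RatFunc K) : K⸨X⸩) = ((q : K⟦X⟧) : K⸨X⸩) := by
    rw [RatFunc.coe_def, AlgHom.commutes, Polynomial.algebraMap_hahnSeries_apply]
  rw [hp, hq', ← PowerSeries.coe_mul, hmul]

theorem res_eq_zero {a : K} {p q : K[X]} (hq : q.eval a ≠ 0) :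
    res a (algebraMap K[X] (RatFunc K) p / algebraMap K[X] (RatFunc K) q) = 0 := by
  have hq0 : q ≠ 0 := fun h => hq (by simp [h])
  set p' := p.comp (X + Polynomial.C a) with hp'
  set q' := q.comp (X + Polynomial.C a) with hq'
  have he : q'.eval 0 = q.eval a := by
    simp [hq', Polynomial.eval_comp]
  have hc0 : q'.coeff 0 ≠ 0 := by
    rw [Polynomial.coeff_zero_eq_eval_zero, he]; exact hq
  have hq'0 : q' ≠ 0 := fun h => hc0 (by simp [h])
  rw [res, map_div₀, subst_algebraMap, subst_algebraMap, ← hp', ← hq',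
    coe_poly_div p' q' hq'0 hc0, PowerSeries.coeff_coe]
  norm_num

theorem res_C_div_X (c : K) : res 0 (RatFunc.C c / RatFunc.X) = c := by
  rw [res, subst_zero, map_div₀, RatFunc.coe_C, RatFunc.coe_X, div_eq_mul_inv,
    HahnSeries.inv_single (1 : ℤ) (1 : K), inv_one]
  rw [HahnSeries.C_apply, HahnSeries.single_mul_single]
  norm_num [HahnSeries.coeff_single_same]

theorem finite_res_support (f : RatFunc K) : {a : K | res a f ≠ 0}.Finite := by
  refine Set.Finite.subset (Polynomial.finite_setOf_isRoot (f.denom_ne_zero)) ?_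
  intro a ha
  by_contra h
  apply ha
  rw [← RatFunc.num_div_denom f]
  exact res_eq_zero h

/-- Applying a ring hom to each coefficient of a Laurent series, as a ring hom. -/
noncomputable def lmap (τ : K →+* K) : K⸨X⸩ →+* K⸨X⸩ where
  toFun s := s.map (τ : K →+* K)
  map_one' := by
    ext n
    simp only [HahnSeries.map_coeff, HahnSeries.coeff_one]
    split_ifs <;> simp
  map_mul' x y := by
    have := HahnSeries.map_mul (R := K) (S := K) (Γ := ℤ) (τ : K →ₙ+* K) (x := x) (y := y)
    exact this
  map_zero' := by
    ext n
    simp [HahnSeries.map_coeff]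
  map_add' x y := by
    have := HahnSeries.map_add (R := K) (S := K) (Γ := ℤ) (τ : K →+ K) (x := x) (y := y)
    exact this

theorem lmap_coeff (τ : K →+* K) (s : K⸨X⸩) (n : ℤ) : (lmap τ s).coeff n = τ (s.coeff n) := rfl

theorem coe_comm (τ : K →+* K) (Φ : RatFunc K →+* RatFunc K)
    (hC : ∀ a : K, Φ (RatFunc.C a) = RatFunc.C (τ a)) (hX : Φ RatFunc.X = RatFunc.X)
    (f : RatFunc K) :
    ((Φ f : RatFunc K) : K⸨X⸩) = lmap τ (f : K⸨X⸩) := by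
  have h : ((RatFunc.coeAlgHom K : RatFunc K →ₐ[K[X]] K⸨X⸩) : RatFunc K →+* K⸨X⸩).comp Φ
      = (lmap τ).comp ((RatFunc.coeAlgHom K : RatFunc K →ₐ[K[X]] K⸨X⸩) : RatFunc K →+* K⸨X⸩) := by
    refine ringHom_ext (fun a => ?_) ?_
    · show ((Φ (RatFunc.C a) : RatFunc K) : K⸨X⸩) = lmap τ ((RatFunc.C a : RatFunc K) : K⸨X⸩)
      rw [hC, RatFunc.coe_C, RatFunc.coe_C]
      ext n
      simp only [lmap_coeff, HahnSeries.C_apply, HahnSeries.coeff_single]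
      split_ifs <;> simp
    · show ((Φ RatFunc.X : RatFunc K) : K⸨X⸩) = lmap τ ((RatFunc.X : RatFunc K) : K⸨X⸩)
      rw [hX, RatFunc.coe_X]
      ext n
      simp only [lmap_coeff, HahnSeries.coeff_single]
      split_ifs <;> simp
  exact RingHom.congr_fun h f

theorem res_map (τ : K →+* K) (Φ : RatFunc K →+* RatFunc K)
    (hC : ∀ a : K, Φ (RatFunc.C a) = RatFunc.C (τ a)) (hX : Φ RatFunc.X = RatFunc.X)
    (a : K) (f : RatFunc K) :
    res (τ a) (Φ f) = τ (res a f) := by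
  have h1 : ((subst (τ a) : RatFunc K →ₐ[K] RatFunc K) : RatFunc K →+* RatFunc K).comp Φ
      = Φ.comp ((subst a : RatFunc K →ₐ[K] RatFunc K) : RatFunc K →+* RatFunc K) := by
    refine ringHom_ext (fun b => ?_) ?_
    · show subst (τ a) (Φ (RatFunc.C b)) = Φ (subst a (RatFunc.C b))
      rw [hC, subst_C, subst_C, hC]
    · show subst (τ a) (Φ RatFunc.X) = Φ (subst a RatFunc.X)
      rw [hX, subst_X, subst_X, map_add, hX, hC]
  have h2 : subst (τ a) (Φ f) = Φ (subst a f) := RingHom.congr_fun h1 f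
  rw [res, h2, coe_comm τ Φ hC hX, lmap_coeff, res]

variable [CharZero K]

theorem finite_int_support (f : RatFunc K) :
    (Function.support fun n : ℤ => res ((n : ℤ) : K) f).Finite := by
  have : (Function.support fun n : ℤ => res ((n : ℤ) : K) f)
      ⊆ (fun n : ℤ => ((n : ℤ) : K)) ⁻¹' {a : K | res a f ≠ 0} := fun n hn => hn
  refine Set.Finite.subset ?_ this
  exact Set.Finite.preimage (Set.injOn_of_injective Int.cast_injective) (finite_res_support f)

theorem sum_res_shift (G : RatFunc K) :
    ∑ᶠ n : ℤ, res ((n : ℤ) : K) (subst 1 G - G) = 0 := by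
  have h1 : ∀ n : ℤ, res ((n : ℤ) : K) (subst 1 G - G)
      = res (((n + 1 : ℤ) : ℤ) : K) G - res ((n : ℤ) : K) G := by
    intro n
    rw [res_sub, res_subst]
    push_cast
    ring_nf
  rw [finsum_congr h1]
  have hfin1 : (Function.support fun n : ℤ => res (((n + 1 : ℤ) : ℤ) : K) G).Finite := by
    have := Set.Finite.preimage (f := fun n : ℤ => n + 1)
      (Set.injOn_of_injective (add_left_injective 1)) (finite_int_support G)
    exact this
  rw [finsum_sub_distrib hfin1 (finite_int_support G), sub_eq_zero]
  exact finsum_comp_equiv (Equiv.addRight (1 : ℤ)) (f := fun n : ℤ => res ((n : ℤ) : K) G)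

theorem not_summable_one_div_X (G : RatFunc K) :
    (RatFunc.X : RatFunc K)⁻¹ ≠ subst (1 : K) G - G := by
  intro h
  have hsum := congrArg (fun f : RatFunc K => ∑ᶠ n : ℤ, res ((n : ℤ) : K) f) h
  rw [sum_res_shift] at hsum
  have hX : (RatFunc.X : RatFunc K)⁻¹
      = algebraMap K[X] (RatFunc K) (Polynomial.C 1) / algebraMap K[X] (RatFunc K) X := by
    rw [RatFunc.algebraMap_C, RatFunc.algebraMap_X, map_one, one_div]
  have hone : ∑ᶠ n : ℤ, res ((n : ℤ) : K) (RatFunc.X : RatFunc K)⁻¹ = 1 := by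
    rw [finsum_eq_single _ (0 : ℤ)]
    · rw [Int.cast_zero]
      have : (RatFunc.X : RatFunc K)⁻¹ = RatFunc.C 1 / RatFunc.X := by
        rw [map_one, one_div]
      rw [this, res_C_div_X]
    · intro n hn
      rw [hX]
      refine res_eq_zero ?_
      simpa using (Int.cast_ne_zero (α := K)).mpr hn
  rw [hone] at hsum
  exact one_ne_zero hsum

end NSum

open NSum in
/-- Let `F` be an algebraically closed field of characteristic zero and let `σ_x, σ_y`
be the shift `F`-automorphisms of `F(x,y)` (`σ_x(x) = x+1`, `σ_x(y) = y`, `σ_y(x) = x`,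
`σ_y(y) = y+1`).  Then `1/(xy)` is not `(σ_x,σ_y)`-summable in `F(x,y)`. -/
theorem not_shift_summable_inv_xy
    (F : Type*) [Field F] [IsAlgClosed F] [CharZero F]
    (σx σy : RatFunc2 F ≃ₐ[F] RatFunc2 F)
    (hσxx : σx (RatFunc2.x F) = RatFunc2.x F + 1)
    (hσxy : σx (RatFunc2.y F) = RatFunc2.y F)
    (hσyx : σy (RatFunc2.x F) = RatFunc2.x F)
    (hσyy : σy (RatFunc2.y F) = RatFunc2.y F + 1) :
    ¬ ∃ g h : RatFunc2 F,
        1 / (RatFunc2.x F * RatFunc2.y F) = σx g - g + σy h - h := by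
  rintro ⟨g, h, heq⟩
  haveI : CharZero (RatFunc F) :=
    charZero_of_injective_algebraMap (algebraMap F (RatFunc F)).injective
  set K := RatFunc F with hK
  -- the constant embedding commutes with everything
  have hFC : ∀ a : F, RatFunc.C (RatFunc.C a : K) = algebraMap F (RatFunc2 F) a := by
    intro a
    rw [IsScalarTower.algebraMap_apply F (K[X]) (RatFunc K) a,
      IsScalarTower.algebraMap_apply F K (K[X]) a, Polynomial.algebraMap_eq,
      RatFunc.algebraMap_C, RatFunc.algebraMap_eq_C]
  -- σy fixes constants (elements of K = F(x))
  have hσyC : ∀ c : K, σy (RatFunc.C c) = RatFunc.C c := by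
    have h1 : ((σy : RatFunc2 F ≃+* RatFunc2 F) : RatFunc2 F →+* RatFunc2 F).comp
        (RatFunc.C : K →+* RatFunc K) = (RatFunc.C : K →+* RatFunc K) := by
      refine ringHom_ext (fun a => ?_) ?_
      · show σy (RatFunc.C (RatFunc.C a)) = RatFunc.C (RatFunc.C a)
        rw [hFC, AlgEquiv.commutes]
      · exact hσyx
    exact fun c => RingHom.congr_fun h1 c
  -- σx acts on constants as the shift x ↦ x + 1
  have hσxC : ∀ c : K, σx (RatFunc.C c) = RatFunc.C (subst (1 : F) c) := by
    have h1 : ((σx : RatFunc2 F ≃+* RatFunc2 F) : RatFunc2 F →+* RatFunc2 F).comp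
        (RatFunc.C : K →+* RatFunc K)
        = (RatFunc.C : K →+* RatFunc K).comp
          ((subst (1 : F) : RatFunc F →ₐ[F] RatFunc F) : RatFunc F →+* RatFunc F) := by
      refine ringHom_ext (fun a => ?_) ?_
      · show σx (RatFunc.C (RatFunc.C a)) = RatFunc.C (subst (1 : F) (RatFunc.C a))
        rw [subst_C, hFC, AlgEquiv.commutes]
      · show σx (RatFunc.C RatFunc.X) = RatFunc.C (subst (1 : F) RatFunc.X)
        rw [hσxx, subst_X, map_add]
        simp
    exact fun c => RingHom.congr_fun h1 c
  -- σy is the substitution y ↦ y + 1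
  have hσyeq : ∀ f : RatFunc2 F, σy f = subst (1 : K) f := by
    have h1 : ((σy : RatFunc2 F ≃+* RatFunc2 F) : RatFunc2 F →+* RatFunc2 F)
        = ((subst (1 : K) : RatFunc K →ₐ[K] RatFunc K) : RatFunc K →+* RatFunc K) := by
      refine ringHom_ext (fun c => ?_) ?_
      · show σy (RatFunc.C c) = subst (1 : K) (RatFunc.C c)
        rw [hσyC c, subst_C]
      · show σy RatFunc.X = subst (1 : K) RatFunc.X
        rw [hσyy, subst_X, map_one]
    exact fun f => RingHom.congr_fun h1 f
  set τ : K →+* K :=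
    ((subst (1 : F) : RatFunc F →ₐ[F] RatFunc F) : RatFunc F →+* RatFunc F) with hτ
  -- residues of σx g
  have hresx : ∀ (n : ℤ) (f : RatFunc2 F),
      res ((n : ℤ) : K) (σx f) = τ (res ((n : ℤ) : K) f) := by
    intro n f
    have := res_map τ ((σx : RatFunc2 F ≃+* RatFunc2 F) : RatFunc2 F →+* RatFunc2 F)
      hσxC hσxy ((n : ℤ) : K) f
    rwa [map_intCast τ n] at this
  -- rewrite the equation
  rw [hσyeq h] at heq
  have heq2 : (1 : RatFunc2 F) / (RatFunc2.x F * RatFunc2.y F)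
      = (σx g - g) + (subst (1 : K) h - h) := by rw [heq]; ring
  -- the left-hand side as C c / X
  have hc : (1 : RatFunc2 F) / (RatFunc2.x F * RatFunc2.y F)
      = RatFunc.C ((RatFunc.X : K)⁻¹) / RatFunc.X := by
    rw [one_div, mul_inv, map_inv₀, div_eq_mul_inv]
  -- sum of residues of the left-hand side
  have hLHS : ∑ᶠ n : ℤ, res ((n : ℤ) : K) ((1 : RatFunc2 F) / (RatFunc2.x F * RatFunc2.y F))
      = (RatFunc.X : K)⁻¹ := by
    rw [hc, finsum_eq_single _ (0 : ℤ)]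
    · rw [Int.cast_zero, res_C_div_X]
    · intro n hn
      rw [← RatFunc.algebraMap_C (K := K), ← RatFunc.algebraMap_X (K := K)]
      refine res_eq_zero ?_
      simpa using (Int.cast_ne_zero (α := K)).mpr hn
  -- sum of residues of the right-hand side
  set u : ℤ → K := fun n => res ((n : ℤ) : K) g with hu
  have hA : ∑ᶠ n : ℤ, res ((n : ℤ) : K) (σx g - g) = τ (∑ᶠ n : ℤ, u n) - ∑ᶠ n : ℤ, u n := by
    have hptw : ∀ n : ℤ, res ((n : ℤ) : K) (σx g - g) = τ (u n) - u n := by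
      intro n; rw [res_sub, hresx]
    rw [finsum_congr hptw]
    have hfu : (Function.support u).Finite := finite_int_support g
    have hfτu : (Function.support fun n => τ (u n)).Finite := by
      refine Set.Finite.subset hfu ?_
      intro n hn
      simp only [Function.mem_support] at hn ⊢
      intro h0; exact hn (by rw [h0, map_zero])
    rw [finsum_sub_distrib hfτu hfu]
    congr 1
    exact (AddMonoidHom.map_finsum (τ.toAddMonoidHom) hfu).symm
  -- put it together
  have hsum := congrArg (fun f : RatFunc2 F => ∑ᶠ n : ℤ, res ((n : ℤ) : K) f) heq2
  rw [hLHS] at hsum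
  have hsplit : ∑ᶠ n : ℤ, res ((n : ℤ) : K) ((σx g - g) + (subst (1 : K) h - h))
      = (∑ᶠ n : ℤ, res ((n : ℤ) : K) (σx g - g))
        + ∑ᶠ n : ℤ, res ((n : ℤ) : K) (subst (1 : K) h - h) := by
    rw [← finsum_add_distrib (finite_int_support _) (finite_int_support _)]
    exact finsum_congr fun n => res_add _ _ _
  rw [hsplit, hA, sum_res_shift, add_zero] at hsum
  exact not_summable_one_div_X (∑ᶠ n : ℤ, u n) hsum
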